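/- Let H be a graph on k vertices and let S ⊆ V(H) be an independent set of size r with 2 ≤ r < k such that removing S disconnects H (S is separating). Then for every integer m ≥ 1 there exists a simple graph G on exactly 2m + (r − 2) + m²·(k − r) vertices such that: (a) G is (k − 1)-degenerate; (b) G contains m² pairwise edge-disjoint copies of H; and consequently (c) at least m² edges must be deleted from G to make it H-free. -/

import Mathlib

open Finset SimpleGraph
open scoped Classical

/-- `f : A → V` realizes a copy of `H` in `G`: it is injective and maps edges of `H`
to edges of `G`.  The copy itself is the subgraph of `G` whose edge set is the image
of the edge set of `H`. -/
def IsCopy {A V : Type*} (H : SimpleGraph A) (G : SimpleGraph V) (f : A → V) : Prop :=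
  Function.Injective f ∧ ∀ a b : A, H.Adj a b → G.Adj (f a) (f b)

/-- `G` contains a copy of `H` (a subgraph isomorphic to `H`). -/
def ContainsCopy {A V : Type*} (H : SimpleGraph A) (G : SimpleGraph V) : Prop :=
  ∃ f : A → V, IsCopy H G f

/-- The edge set of the copy of `H` in `G` realized by `f`. -/
noncomputable def copyEdges {A V : Type*} [Fintype A] [DecidableEq V]
    (H : SimpleGraph A) (f : A → V) : Finset (Sym2 V) :=
  H.edgeFinset.image (Sym2.map f)

/-- `𝒞` is a collection of pairwise edge-disjoint copies of `H` in `G`. -/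
def EdgeDisjointCopies {A V : Type*} [Fintype A] [DecidableEq V]
    (H : SimpleGraph A) (G : SimpleGraph V) (𝒞 : Finset (A → V)) : Prop :=
  (∀ f ∈ 𝒞, IsCopy H G f) ∧
    ∀ f ∈ 𝒞, ∀ g ∈ 𝒞, f ≠ g → Disjoint (copyEdges H f) (copyEdges H g)

/-- `G` is `p`-degenerate: every nonempty finite vertex set `U` contains a vertex with
at most `p` neighbours inside `U`. -/
def Degenerate {V : Type*} (G : SimpleGraph V) (p : ℕ) : Prop :=
  ∀ U : Finset V, U.Nonempty → ∃ v ∈ U, (U.filter fun u => G.Adj v u).card ≤ p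

/-- `G` is `c`-far (in absolute number of edges) from being `H`-free: deleting any set
of at most `c` edges from `G` leaves a graph that contains a copy of `H`. -/
def FarFromFree {A V : Type*} (H : SimpleGraph A) (G : SimpleGraph V) (c : ℝ) : Prop :=
  ∀ D : Finset (Sym2 V), (D.card : ℝ) ≤ c → ContainsCopy H (G.deleteEdges ↑D)

/-- The number of members of the collection `𝒦` whose copy contains the vertex `v`. -/
noncomputable def collDeg {A V : Type*} (𝒦 : Finset (A → V)) (v : V) : ℕ :=
  (𝒦.filter fun φ => v ∈ Set.range φ).card


section AuxConstruction

variable {A V : Type*} {m : ℕ} (H : SimpleGraph A) (F : Fin m → Fin m → A → V)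

/-- The union-of-copies graph: `u ~ v` iff they are the images of an edge of `H`
under one of the copy maps `F i j`. -/
def auxG : SimpleGraph V :=
  SimpleGraph.fromRel fun u v => ∃ i j a b, H.Adj a b ∧ u = F i j a ∧ v = F i j b

lemma aux_adj_imp {u v : V} (h : (auxG H F).Adj u v) :
    ∃ i j a b, H.Adj a b ∧ u = F i j a ∧ v = F i j b := by
  rw [auxG, SimpleGraph.fromRel_adj] at h
  rcases h.2 with ⟨i,j,a,b,hab,h1,h2⟩ | ⟨i,j,a,b,hab,h1,h2⟩
  · exact ⟨i,j,a,b,hab,h1,h2⟩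
  · exact ⟨i,j,b,a,hab.symm,h2,h1⟩

lemma aux_copy (hinj : ∀ i j, Function.Injective (F i j)) (i j : Fin m) (a b : A)
    (hab : H.Adj a b) : (auxG H F).Adj (F i j a) (F i j b) := by
  rw [auxG, SimpleGraph.fromRel_adj]
  exact ⟨fun h => H.ne_of_adj hab (hinj i j h), Or.inl ⟨i, j, a, b, hab, rfl, rfl⟩⟩

end AuxConstruction

section AuxConstruction2

variable {A V : Type*} [Fintype A] [DecidableEq A] [DecidableEq V]
  {m : ℕ} (H : SimpleGraph A) (S : Finset A) (F : Fin m → Fin m → A → V)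

lemma aux_disjoint
    (hkey : ∀ i j i' j' a b, a ∉ S → F i j a = F i' j' b → i = i' ∧ j = j')
    (hind : ∀ a ∈ S, ∀ b ∈ S, ¬ H.Adj a b)
    {i j i' j' : Fin m} (hne : ¬ (i = i' ∧ j = j')) :
    Disjoint (copyEdges H (F i j)) (copyEdges H (F i' j')) := by
  rw [Finset.disjoint_left]
  intro d hd hd'
  simp only [copyEdges, Finset.mem_image] at hd hd'
  obtain ⟨e1, he1, rfl⟩ := hd
  obtain ⟨e2, he2, heq⟩ := hd'
  induction e1 using Sym2.ind with | _ x y => ?_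
  induction e2 using Sym2.ind with | _ a b => ?_
  have hxy : H.Adj x y := by simpa using he1
  have hab : H.Adj a b := by simpa using he2
  have hx_or : x ∉ S ∨ y ∉ S := by
    by_contra hc
    push_neg at hc
    exact hind x hc.1 y hc.2 hxy
  simp only [Sym2.map_pair_eq, Sym2.eq_iff] at heq
  rcases heq with ⟨h1, h2⟩ | ⟨h1, h2⟩ <;> rcases hx_or with hz | hz
  · exact hne (hkey i j i' j' x a hz h1.symm)
  · exact hne (hkey i j i' j' y b hz h2.symm)
  · exact hne (hkey i j i' j' x b hz h2.symm)
  · exact hne (hkey i j i' j' y a hz h1.symm)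

lemma aux_degenerate
    (hinj : ∀ i j, Function.Injective (F i j))
    (hkey : ∀ i j i' j' a b, a ∉ S → F i j a = F i' j' b → i = i' ∧ j = j')
    (hind : ∀ a ∈ S, ∀ b ∈ S, ¬ H.Adj a b)
    (U : Finset V) (hU : U.Nonempty) :
    ∃ v ∈ U, (U.filter fun u => (auxG H F).Adj v u).card ≤ Fintype.card A - 1 := by
  by_cases hB : ∃ v ∈ U, ∃ i j a, a ∉ S ∧ v = F i j a
  · obtain ⟨v, hvU, i, j, a0, ha0, rfl⟩ := hB
    refine ⟨F i j a0, hvU, ?_⟩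
    have hsub : (U.filter fun u => (auxG H F).Adj (F i j a0) u) ⊆
        (H.neighborFinset a0).image (F i j) := by
      intro u hu
      have hadj := (Finset.mem_filter.mp hu).2
      obtain ⟨i', j', x, y, hxy, hx, hy⟩ := aux_adj_imp H F hadj
      obtain ⟨rfl, rfl⟩ := hkey i j i' j' a0 x ha0 hx
      obtain rfl := hinj i j hx
      exact Finset.mem_image.mpr ⟨y, by simpa using hxy, hy.symm⟩
    calc (U.filter fun u => (auxG H F).Adj (F i j a0) u).card
        ≤ ((H.neighborFinset a0).image (F i j)).card := Finset.card_le_card hsub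
      _ ≤ (H.neighborFinset a0).card := Finset.card_image_le
      _ = H.degree a0 := H.card_neighborFinset_eq_degree a0
      _ ≤ Fintype.card A - 1 := Nat.le_sub_one_of_lt (H.degree_lt_card_verts a0)
  · obtain ⟨v, hv⟩ := hU
    refine ⟨v, hv, ?_⟩
    have hempty : (U.filter fun u => (auxG H F).Adj v u) = ∅ := by
      rw [Finset.filter_eq_empty_iff]
      intro u hu hadj
      obtain ⟨i, j, a, b, hab, hva, hub⟩ := aux_adj_imp H F hadj
      by_cases haS : a ∈ S
      · have hbS : b ∉ S := fun hb => hind a haS b hb hab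
        exact hB ⟨u, hu, i, j, b, hbS, hub⟩
      · exact hB ⟨v, hv, i, j, a, haS, hva⟩
    simp [hempty]

end AuxConstruction2

/-- The concrete copy map into the structured vertex type: the two distinguished
vertices `s1, s2` of `S` go to the hubs `i` and `j`, the rest of `S` goes to the
fixed part, and the vertices outside `S` go to the private block indexed by `(i, j)`. -/
def auxF {A : Type*} [DecidableEq A] {m p q : ℕ} (s1 s2 : A) (E2 : Finset A)
    (φ : {a // a ∈ E2} → Fin p) (ψ : A → Fin q) (i j : Fin m) (a : A) :
    Fin m ⊕ Fin m ⊕ Fin p ⊕ Fin m × Fin m × Fin q :=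
  if a = s1 then Sum.inl i
  else if a = s2 then Sum.inr (Sum.inl j)
  else if h : a ∈ E2 then Sum.inr (Sum.inr (Sum.inl (φ ⟨a, h⟩)))
  else Sum.inr (Sum.inr (Sum.inr (i, j, ψ a)))

/-- Let `H` be a graph on `k` vertices with an independent separating set
`S` of size `r` (`2 ≤ r < k`).  Then for every `m ≥ 1` there is a simple graph `G` on
exactly `2m + (r − 2) + m²·(k − r)` vertices that is `(k − 1)`-degenerate, contains `m²`
pairwise edge-disjoint copies of `H`, and from which at least `m²` edges must be deleted to
make it `H`-free. -/
theorem statement_13 {A : Type*} [Fintype A] [DecidableEq A]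
    (k r m : ℕ) (hm : 1 ≤ m) (hr2 : 2 ≤ r) (hrk : r < k)
    (H : SimpleGraph A) (hA : Fintype.card A = k)
    (S : Finset A) (hS : S.card = r)
    (hind : ∀ a ∈ S, ∀ b ∈ S, ¬ H.Adj a b)
    (hsep : ¬ (H.induce ((↑S : Set A)ᶜ)).Connected) :
    ∃ G : SimpleGraph (Fin (2 * m + (r - 2) + m ^ 2 * (k - r))),
      Degenerate G (k - 1) ∧
      (∃ 𝒞 : Finset (A → Fin (2 * m + (r - 2) + m ^ 2 * (k - r))),
        EdgeDisjointCopies H G 𝒞 ∧ m ^ 2 ≤ 𝒞.card) ∧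
      (∀ D : Finset (Sym2 (Fin (2 * m + (r - 2) + m ^ 2 * (k - r)))), D.card < m ^ 2 →
        ContainsCopy H (G.deleteEdges ↑D)) := by
  classical
  -- choose the two distinguished vertices of `S`
  obtain ⟨s1, hs1, s2, hs2, hne⟩ := Finset.one_lt_card.mp (by omega : 1 < S.card)
  have hkr : 0 < k - r := by omega
  set E2 := (S.erase s1).erase s2 with hE2
  have hs2' : s2 ∈ S.erase s1 := Finset.mem_erase.mpr ⟨Ne.symm hne, hs2⟩
  have hE2card : E2.card = r - 2 := by
    rw [hE2, Finset.card_erase_of_mem hs2', Finset.card_erase_of_mem hs1, hS]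
    omega
  have hE2sub : ∀ a ∈ E2, a ∈ S := fun a h =>
    Finset.mem_of_mem_erase (Finset.mem_of_mem_erase h)
  have hSsub : ∀ a, a ∈ S → a ≠ s1 → a ≠ s2 → a ∈ E2 := by
    intro a ha h1 h2
    simp [hE2, Finset.mem_erase, h1, h2, ha]
  have hcardE2 : Fintype.card {a // a ∈ E2} = r - 2 := by
    rw [Fintype.card_coe, hE2card]
  have hcardC : Fintype.card {a // a ∈ Sᶜ} = k - r := by
    rw [Fintype.card_coe, Finset.card_compl, hA, hS]
  set φ := Fintype.equivFinOfCardEq hcardE2 with hφ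
  set ψ := Fintype.equivFinOfCardEq hcardC with hψ
  set ψ' : A → Fin (k - r) := fun a => if h : a ∈ Sᶜ then ψ ⟨a, h⟩ else ⟨0, hkr⟩ with hψ'
  set f : Fin m → Fin m → A → _ := fun i j => auxF s1 s2 E2 φ ψ' i j with hf
  -- injectivity of the structured copy maps
  have hfinj : ∀ i j, Function.Injective (f i j) := by
    intro i j a b hab
    simp only [hf, auxF] at hab
    split_ifs at hab with h1 h2 h3 h4 h5 h6 h7 h8 h9 <;> simp_all
  -- where vertices outside `S` land
  have hblock : ∀ (i j : Fin m) a, a ∉ S →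
      f i j a = Sum.inr (Sum.inr (Sum.inr (i, j, ψ' a))) := by
    intro i j a ha
    have h1 : a ≠ s1 := fun h => ha (h ▸ hs1)
    have h2 : a ≠ s2 := fun h => ha (h ▸ hs2)
    have h3 : a ∉ E2 := fun h => ha (hE2sub a h)
    simp [hf, auxF, h1, h2, h3]
  have hnb : ∀ (i j : Fin m) a, a ∈ S → ∀ w, f i j a ≠ Sum.inr (Sum.inr (Sum.inr w)) := by
    intro i j a ha w
    by_cases h1 : a = s1
    · simp [hf, auxF, h1]
    by_cases h2 : a = s2
    · simp [hf, auxF, h1, h2, Ne.symm hne]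
    · have h3 : a ∈ E2 := hSsub a ha h1 h2
      simp [hf, auxF, h1, h2, h3]
  have hkeyf : ∀ i j i' j' a b, a ∉ S → f i j a = f i' j' b → i = i' ∧ j = j' := by
    intro i j i' j' a b ha h
    rw [hblock i j a ha] at h
    by_cases hb : b ∈ S
    · exact absurd h.symm (hnb i' j' b hb _)
    · rw [hblock i' j' b hb] at h
      simp only [Sum.inr.injEq, Prod.mk.injEq] at h
      exact ⟨h.1, h.2.1⟩
  -- transport to `Fin N`
  have hWcard : Fintype.card (Fin m ⊕ Fin m ⊕ Fin (r - 2) ⊕ Fin m × Fin m × Fin (k - r))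
      = 2 * m + (r - 2) + m ^ 2 * (k - r) := by
    simp only [Fintype.card_sum, Fintype.card_prod, Fintype.card_fin]
    ring
  set e := Fintype.equivFinOfCardEq hWcard with he
  set F : Fin m → Fin m → A → Fin (2 * m + (r - 2) + m ^ 2 * (k - r)) :=
    fun i j a => e (f i j a) with hF
  have hFinj : ∀ i j, Function.Injective (F i j) := fun i j =>
    e.injective.comp (hfinj i j)
  have hFkey : ∀ i j i' j' a b, a ∉ S → F i j a = F i' j' b → i = i' ∧ j = j' :=
    fun i j i' j' a b ha h => hkeyf i j i' j' a b ha (e.injective h)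
  -- the two hub values
  have hfs1 : ∀ (i j : Fin m), f i j s1 = Sum.inl i := by
    intro i j; simp [hf, auxF]
  have hfs2 : ∀ (i j : Fin m), f i j s2 = Sum.inr (Sum.inl j) := by
    intro i j
    have h21 : s2 ≠ s1 := Ne.symm hne
    simp [hf, auxF, h21]
  have hpairInj : Function.Injective (fun p : Fin m × Fin m => F p.1 p.2) := by
    intro p q h
    have h1 : F p.1 p.2 s1 = F q.1 q.2 s1 := congrFun h s1
    have h2 : F p.1 p.2 s2 = F q.1 q.2 s2 := congrFun h s2
    rw [hF] at h1 h2
    have h1' := e.injective h1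
    have h2' := e.injective h2
    rw [hfs1, hfs1] at h1'
    rw [hfs2, hfs2] at h2'
    have : p.1 = q.1 := by simpa using h1'
    have : p.2 = q.2 := by simpa using h2'
    exact Prod.ext ‹p.1 = q.1› ‹p.2 = q.2›
  have hdisjF : ∀ p q : Fin m × Fin m, p ≠ q →
      Disjoint (copyEdges H (F p.1 p.2)) (copyEdges H (F q.1 q.2)) := by
    intro p q hpq
    exact aux_disjoint H S F hFkey hind fun hh => hpq (Prod.ext hh.1 hh.2)
  refine ⟨auxG H F, ?_, ?_, ?_⟩
  · -- degeneracy
    intro U hU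
    have := aux_degenerate H S F hFinj hFkey hind U hU
    rwa [hA] at this
  · -- the collection of edge-disjoint copies
    refine ⟨(Finset.univ : Finset (Fin m × Fin m)).image (fun p => F p.1 p.2), ⟨?_, ?_⟩, ?_⟩
    · intro g hg
      obtain ⟨p, -, rfl⟩ := Finset.mem_image.mp hg
      exact ⟨hFinj p.1 p.2, fun a b hab => aux_copy H F hFinj p.1 p.2 a b hab⟩
    · intro g hg g' hg' hgg
      obtain ⟨p, -, rfl⟩ := Finset.mem_image.mp hg
      obtain ⟨q, -, rfl⟩ := Finset.mem_image.mp hg'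
      exact hdisjF p q fun h => hgg (by rw [h])
    · rw [Finset.card_image_of_injective _ hpairInj]
      simp [sq]
  · -- farness
    intro D hD
    have hex : ∃ p : Fin m × Fin m, Disjoint (copyEdges H (F p.1 p.2)) (↑D : Finset _) := by
      by_contra hc
      push_neg at hc
      have hchoice : ∀ p : Fin m × Fin m,
          ∃ d, d ∈ copyEdges H (F p.1 p.2) ∧ d ∈ D :=
        fun p => Finset.not_disjoint_iff.mp (hc p)
      choose gE hg1 hg2 using hchoice
      have hginj : Function.Injective gE := by
        intro p q h
        by_contra hpq
        exact (Finset.disjoint_left.mp (hdisjF p q hpq) (hg1 p)) (h ▸ hg1 q)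
      have hle : (Finset.univ : Finset (Fin m × Fin m)).card ≤ D.card :=
        Finset.card_le_card_of_injOn gE (fun p _ => hg2 p) hginj.injOn
      have : m * m ≤ D.card := by simpa using hle
      have : m ^ 2 = m * m := sq m
      omega
    obtain ⟨p, hp⟩ := hex
    refine ⟨F p.1 p.2, hFinj p.1 p.2, fun a b hab => ?_⟩
    rw [SimpleGraph.deleteEdges_adj]
    refine ⟨aux_copy H F hFinj p.1 p.2 a b hab, ?_⟩
    intro hmem
    have hcopy : s(F p.1 p.2 a, F p.1 p.2 b) ∈ copyEdges H (F p.1 p.2) :=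
      Finset.mem_image.mpr ⟨s(a, b), by simpa using hab, by simp⟩
    exact (Finset.disjoint_left.mp hp hcopy) (by simpa using hmem)
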